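/- Let y = A·x_S + e where x_S ∈ ℝⁿ is K-sparse with support S, and A satisfies the RIP of order 3K with constant δ_{3K} and of order 4K with constant δ_{4K} < 1. Let 1 ≤ p+q ≤ K, let U be an index set with |U| ≤ 3K containing {π(1),…,π(p+q)}, and let u be the least-squares solution on U. If x*_{p+q} > (√2·δ_{4K}/√(1−δ_{4K}²))·‖(x_S)_{\overline{U}}‖ + √2·τ₁·‖e‖, where τ₁ := √(1+δ_{3K})/(1−δ_{4K}), then min_{j ∈ {π(1),…,π(p+q)}} |u_j| > max_{i ∈ U \ S} |u_i|. -/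

import Mathlib

open Finset

/-- Euclidean norm of a vector. -/
noncomputable def euclNorm {d : ℕ} (x : Fin d → ℝ) : ℝ := Real.sqrt (∑ i, x i ^ 2)

/-- The support of a vector, as a finite set of indices. -/
noncomputable def supp {d : ℕ} (x : Fin d → ℝ) : Finset (Fin d) :=
  Finset.univ.filter (fun i => x i ≠ 0)

/-- `restrict x T` agrees with `x` on `T` and is zero outside `T`. -/
def restrict {d : ℕ} (x : Fin d → ℝ) (T : Finset (Fin d)) : Fin d → ℝ :=
  fun i => if i ∈ T then x i else 0

/-- `A` satisfies the Restricted Isometry Property of order `L` with constant `δ ∈ (0,1)`. -/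
def RIP {m d : ℕ} (A : Matrix (Fin m) (Fin d) ℝ) (L : ℕ) (δ : ℝ) : Prop :=
  0 < δ ∧ δ < 1 ∧
  ∀ x : Fin d → ℝ, (supp x).card ≤ L →
    (1 - δ) * euclNorm x ^ 2 ≤ euclNorm (A.mulVec x) ^ 2 ∧
    euclNorm (A.mulVec x) ^ 2 ≤ (1 + δ) * euclNorm x ^ 2

/-- `u` is the least-squares solution on the index set `U`: it is supported on `U` and
`y - A u` is orthogonal to `A z` whenever `z` is supported on `U`. -/
def LeastSq {m d : ℕ} (A : Matrix (Fin m) (Fin d) ℝ) (y : Fin m → ℝ)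
    (U : Finset (Fin d)) (u : Fin d → ℝ) : Prop :=
  supp u ⊆ U ∧ ∀ z : Fin d → ℝ, supp z ⊆ U →
    ∑ i, (y i - A.mulVec u i) * A.mulVec z i = 0

lemma euclNorm_sq {d : ℕ} (x : Fin d → ℝ) : euclNorm x ^ 2 = ∑ i, x i ^ 2 := by
  rw [euclNorm, Real.sq_sqrt (by positivity)]

lemma quad_disc {X Y Z : ℝ} (h : ∀ s t : ℝ, 0 ≤ X * s ^ 2 + 2 * Y * (s * t) + Z * t ^ 2) :
    Y ^ 2 ≤ X * Z := by
  have h' : ∀ s : ℝ, 0 ≤ X * (s * s) + (2 * Y) * s + Z := by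
    intro s
    nlinarith [h s 1]
  have hd := discrim_le_zero h'
  rw [discrim] at hd
  nlinarith [hd]

lemma le_of_sq_le' {X Y : ℝ} (h : X ^ 2 ≤ Y ^ 2) (hY : 0 ≤ Y) : X ≤ Y := by
  nlinarith [sq_nonneg (X + Y), sq_nonneg (X - Y)]

lemma nonpos_of_mul_nonpos' {x t : ℝ} (h : x * t ≤ 0) (ht : 0 < t) : x ≤ 0 := by
  by_contra hx; push_neg at hx; nlinarith [mul_pos hx ht]

lemma sum_sq_expand {ι : Type*} [Fintype ι] (s t : ℝ) (f g : ι → ℝ) :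
    ∑ i, (s * f i + t * g i) ^ 2
      = s ^ 2 * (∑ i, f i ^ 2) + t ^ 2 * (∑ i, g i ^ 2) + 2 * s * t * (∑ i, f i * g i) := by
  rw [Finset.mul_sum, Finset.mul_sum, Finset.mul_sum, ← Finset.sum_add_distrib,
    ← Finset.sum_add_distrib]
  exact Finset.sum_congr rfl fun i _ => by ring

set_option maxHeartbeats 2000000 in
/-- if the gap condition on `x*_{p+q}` holds, the `p+q` largest-magnitude
entries of `x_S` dominate, in the least-squares solution `u` on `U`, every wrong index
of `U`.  Here `π` is 0-indexed: `π i` is the index of the `(i+1)`-th largest-magnitude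
entry of `x_S`, so `x*_t = |x_S (π (t-1))|`. -/
theorem cosamp_selection_condition
    {m d K : ℕ} (A : Matrix (Fin m) (Fin d) ℝ) (xS : Fin d → ℝ) (e : Fin m → ℝ)
    (δ3 δ4 : ℝ)
    (hRIP3 : RIP A (3 * K) δ3) (hRIP4 : RIP A (4 * K) δ4)
    (π : ℕ → Fin d)
    (hπinj : ∀ i j, i < K → j < K → π i = π j → i = j)
    (hπsupp : supp xS ⊆ (Finset.range K).image π)
    (hπsort : ∀ i j, i ≤ j → j < K → |xS (π j)| ≤ |xS (π i)|)
    (p q : ℕ) (hq : 1 ≤ p + q) (hpqK : p + q ≤ K)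
    (U : Finset (Fin d)) (hUcard : U.card ≤ 3 * K)
    (hUπ : ∀ i < p + q, π i ∈ U)
    (u : Fin d → ℝ) (hLS : LeastSq A (A.mulVec xS + e) U u)
    (hgap : Real.sqrt 2 * δ4 / Real.sqrt (1 - δ4 ^ 2) * euclNorm (restrict xS Uᶜ) +
        Real.sqrt 2 * (Real.sqrt (1 + δ3) / (1 - δ4)) * euclNorm e <
      |xS (π (p + q - 1))|) :
    ∀ j < p + q, ∀ i ∈ U \ supp xS, |u i| < |u (π j)| := by
  obtain ⟨hLSsupp, hLSorth⟩ := hLS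
  obtain ⟨hδ4pos, hδ4lt, hR4⟩ := hRIP4
  obtain ⟨hδ3pos, hδ3lt, _⟩ := hRIP3
  have hδ4nn : (0:ℝ) ≤ δ4 := le_of_lt hδ4pos
  set normA := euclNorm (restrict xS Uᶜ) with hnormA
  set σ := Real.sqrt (1 - δ4 ^ 2) with hσdef
  set τ := Real.sqrt (1 + δ3) / (1 - δ4) with hτdef
  set ρ := Real.sqrt (1 - δ4) with hρdef
  set a : Fin d → ℝ := _root_.restrict xS Uᶜ with ha
  set xU : Fin d → ℝ := _root_.restrict xS U with hxU
  set v : Fin d → ℝ := u - xU with hv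
  -- pointwise facts
  have haU : ∀ i, i ∈ U → a i = 0 := by
    intro i hiU; simp [ha, _root_.restrict, Finset.mem_compl, hiU]
  have hvU : ∀ i, i ∉ U → v i = 0 := by
    intro i hiU
    have hu0 : u i = 0 := by
      by_contra h0
      exact hiU (hLSsupp (by simp [supp, h0]))
    simp [hv, hxU, _root_.restrict, hiU, hu0]
  have hav : ∀ i, a i * v i = 0 := by
    intro i; by_cases hiU : i ∈ U
    · simp [haU i hiU]
    · simp [hvU i hiU]
  have hsuppv : supp v ⊆ U := by
    intro i hi
    by_contra hiU
    simp only [supp, Finset.mem_filter, Finset.mem_univ, true_and] at hi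
    exact hi (hvU i hiU)
  -- support cards
  have hScard : (supp xS).card ≤ K := by
    calc (supp xS).card ≤ ((Finset.range K).image π).card := Finset.card_le_card hπsupp
      _ ≤ (Finset.range K).card := Finset.card_image_le
      _ = K := Finset.card_range K
  have hsuppa : supp a ⊆ supp xS := by
    intro i hi
    simp only [supp, Finset.mem_filter, Finset.mem_univ, true_and] at hi ⊢
    intro h0
    exact hi (by simp [ha, _root_.restrict, h0])
  -- quantities
  set A0 := ∑ i, a i ^ 2 with hA0
  set B := ∑ i, v i ^ 2 with hB
  set al := ∑ jj, A.mulVec a jj ^ 2 with hal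
  set ga := ∑ jj, A.mulVec v jj ^ 2 with hga
  set cr := ∑ jj, A.mulVec a jj * A.mulVec v jj with hcr
  have hA0nn : 0 ≤ A0 := by rw [hA0]; positivity
  have hBnn : 0 ≤ B := by rw [hB]; positivity
  have hgann : 0 ≤ ga := by rw [hga]; positivity
  -- the RIP quadratic form
  have hRform : ∀ s t : ℝ,
      (1 - δ4) * (s ^ 2 * A0 + t ^ 2 * B) ≤ s ^ 2 * al + 2 * cr * (s * t) + t ^ 2 * ga ∧
      s ^ 2 * al + 2 * cr * (s * t) + t ^ 2 * ga ≤ (1 + δ4) * (s ^ 2 * A0 + t ^ 2 * B) := by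
    intro s t
    have hqsupp : supp (fun i => s * a i + t * v i) ⊆ supp a ∪ U := by
      intro i hi
      simp only [supp, Finset.mem_filter, Finset.mem_univ, true_and] at hi
      rw [Finset.mem_union]
      by_contra hcon
      push_neg at hcon
      obtain ⟨h1, h2⟩ := hcon
      have ha0 : a i = 0 := by
        by_contra h0
        exact h1 (by simp [supp, h0])
      exact hi (by simp [ha0, hvU i h2])
    have hqcard : (supp (fun i => s * a i + t * v i)).card ≤ 4 * K := by
      calc (supp (fun i => s * a i + t * v i)).card ≤ (supp a ∪ U).card :=
            Finset.card_le_card hqsupp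
        _ ≤ (supp a).card + U.card := Finset.card_union_le _ _
        _ ≤ K + 3 * K := add_le_add (le_trans (Finset.card_le_card hsuppa) hScard) hUcard
        _ = 4 * K := by ring
    have hnq : euclNorm (fun i => s * a i + t * v i) ^ 2 = s ^ 2 * A0 + t ^ 2 * B := by
      rw [euclNorm_sq, sum_sq_expand s t a v,
        Finset.sum_eq_zero fun i _ => hav i]
      rw [hA0, hB]; ring
    have hAq : A.mulVec (fun i => s * a i + t * v i)
        = fun jj => s * A.mulVec a jj + t * A.mulVec v jj := by
      funext jj
      simp only [Matrix.mulVec, dotProduct, Finset.mul_sum, ← Finset.sum_add_distrib]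
      exact Finset.sum_congr rfl fun i _ => by ring
    have hnAq : euclNorm (A.mulVec (fun i => s * a i + t * v i)) ^ 2
        = s ^ 2 * al + 2 * cr * (s * t) + t ^ 2 * ga := by
      rw [hAq, euclNorm_sq, sum_sq_expand s t (A.mulVec a) (A.mulVec v)]
      rw [hal, hga, hcr]; ring
    have := hR4 (fun i => s * a i + t * v i) hqcard
    rw [hnq, hnAq] at this
    exact this
  -- discriminant consequences
  have hX1 : 0 ≤ al - (1 - δ4) * A0 := by
    have h := (hRform 1 0).1; rw [show ((1:ℝ)^2 * A0 + (0:ℝ)^2*B) = A0 by ring, show ((1:ℝ)^2*al + 2*cr*((1:ℝ)*0) + (0:ℝ)^2*ga) = al by ring] at h; linarith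
  have hX2 : 0 ≤ (1 + δ4) * A0 - al := by
    have h := (hRform 1 0).2; rw [show ((1:ℝ)^2 * A0 + (0:ℝ)^2*B) = A0 by ring, show ((1:ℝ)^2*al + 2*cr*((1:ℝ)*0) + (0:ℝ)^2*ga) = al by ring] at h; linarith
  have hZ1 : 0 ≤ ga - (1 - δ4) * B := by
    have h := (hRform 0 1).1; rw [show ((0:ℝ)^2 * A0 + (1:ℝ)^2*B) = B by ring, show ((0:ℝ)^2*al + 2*cr*((0:ℝ)*1) + (1:ℝ)^2*ga) = ga by ring] at h; linarith
  have hZ2 : 0 ≤ (1 + δ4) * B - ga := by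
    have h := (hRform 0 1).2; rw [show ((0:ℝ)^2 * A0 + (1:ℝ)^2*B) = B by ring, show ((0:ℝ)^2*al + 2*cr*((0:ℝ)*1) + (1:ℝ)^2*ga) = ga by ring] at h; linarith
  have d1 : cr ^ 2 ≤ (al - (1 - δ4) * A0) * (ga - (1 - δ4) * B) := by
    apply quad_disc
    intro s t
    have hid : (al - (1 - δ4) * A0) * s ^ 2 + 2 * cr * (s * t) + (ga - (1 - δ4) * B) * t ^ 2
        = (s ^ 2 * al + 2 * cr * (s * t) + t ^ 2 * ga)
          - (1 - δ4) * (s ^ 2 * A0 + t ^ 2 * B) := by ring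
    rw [hid]
    linarith [(hRform s t).1]
  have d2 : cr ^ 2 ≤ ((1 + δ4) * A0 - al) * ((1 + δ4) * B - ga) := by
    apply quad_disc
    intro s t
    have hid : ((1 + δ4) * A0 - al) * s ^ 2 + 2 * cr * (s * t) + ((1 + δ4) * B - ga) * t ^ 2
        = (1 + δ4) * (s ^ 2 * A0 + (-t) ^ 2 * B)
          - (s ^ 2 * al + 2 * cr * (s * (-t)) + (-t) ^ 2 * ga) := by ring
    rw [hid]
    linarith only [(hRform s (-t)).2]
  -- the weighted-sum trick:  cr^2 * B ≤ A0 * (Z1 * Z2)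
  have hstar : cr ^ 2 * B ≤ A0 * ((ga - (1 - δ4) * B) * ((1 + δ4) * B - ga)) := by
    have e1 := mul_le_mul_of_nonneg_right d1 hZ2
    have e2 := mul_le_mul_of_nonneg_right d2 hZ1
    have hsum : 2 * δ4 * (cr ^ 2 * B)
        ≤ 2 * δ4 * (A0 * ((ga - (1 - δ4) * B) * ((1 + δ4) * B - ga))) := by
      nlinarith only [e1, e2, hX1, hX2, hZ1, hZ2]
    exact le_of_mul_le_mul_left hsum (by linarith only [hδ4pos])
  -- the tangent bound:  cr^2 * (1-δ4²) * B ≤ δ4² * A0 * ga²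
  have hss : cr ^ 2 * ((1 - δ4 ^ 2) * B) ≤ δ4 ^ 2 * A0 * ga ^ 2 := by
    have h14 : (0:ℝ) ≤ 1 - δ4 ^ 2 := by nlinarith only [hδ4pos, hδ4lt]
    have h3 := mul_le_mul_of_nonneg_left hstar h14
    nlinarith only [h3, mul_nonneg hA0nn (sq_nonneg (ga - (1 - δ4 ^ 2) * B))]
  -- norms and scalars
  set ε := euclNorm e with hε
  set w := euclNorm (A.mulVec v) with hw
  set tn := euclNorm v with htn
  have hε2 : ε ^ 2 = ∑ jj, e jj ^ 2 := euclNorm_sq e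
  have hw2 : w ^ 2 = ga := euclNorm_sq (A.mulVec v)
  have ht2 : tn ^ 2 = B := euclNorm_sq v
  have hA0eq : normA ^ 2 = A0 := euclNorm_sq a
  have hεnn : 0 ≤ ε := Real.sqrt_nonneg _
  have hwnn : 0 ≤ w := Real.sqrt_nonneg _
  have htnn : 0 ≤ tn := Real.sqrt_nonneg _
  have hnormAnn : 0 ≤ normA := Real.sqrt_nonneg _
  have hσ2 : σ ^ 2 = 1 - δ4 ^ 2 := Real.sq_sqrt (by nlinarith only [hδ4pos, hδ4lt])
  have hρ2 : ρ ^ 2 = 1 - δ4 := Real.sq_sqrt (by linarith only [hδ4lt])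
  have hσpos : 0 < σ := Real.sqrt_pos.mpr (by nlinarith only [hδ4pos, hδ4lt])
  have hρpos : 0 < ρ := Real.sqrt_pos.mpr (by linarith only [hδ4lt])
  -- orthogonality of the residual
  have horth : ga = cr + ∑ jj, e jj * A.mulVec v jj := by
    have hz := hLSorth v hsuppv
    have hAv : ∀ jj, A.mulVec v jj = A.mulVec u jj - A.mulVec xU jj := by
      intro jj; rw [hv, Matrix.mulVec_sub]; simp
    have hAxs : ∀ jj, A.mulVec xS jj = A.mulVec xU jj + A.mulVec a jj := by
      intro jj
      have hxsplit : xS = xU + a := by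
        funext i; by_cases hiU : i ∈ U <;>
          simp [ha, hxU, _root_.restrict, hiU, Finset.mem_compl]
      rw [hxsplit, Matrix.mulVec_add]; simp
    have hterm : ∀ jj, ((A.mulVec xS + e) jj - A.mulVec u jj) * A.mulVec v jj
        = A.mulVec a jj * A.mulVec v jj + e jj * A.mulVec v jj - A.mulVec v jj ^ 2 := by
      intro jj
      have h1 := hAxs jj
      have h2 := hAv jj
      have h3 : (A.mulVec xS + e) jj - A.mulVec u jj
          = A.mulVec a jj + e jj - A.mulVec v jj := by
        simp only [Pi.add_apply]; linarith only [h1, h2]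
      rw [h3]; ring
    rw [Finset.sum_congr rfl fun jj _ => hterm jj, Finset.sum_sub_distrib,
      Finset.sum_add_distrib] at hz
    rw [hga, hcr]
    linarith only [hz]
  -- Cauchy-Schwarz
  have hcs : (∑ jj, e jj * A.mulVec v jj) ≤ ε * w := by
    apply le_of_sq_le' _ (mul_nonneg hεnn hwnn)
    have h1 := Finset.sum_mul_sq_le_sq_mul_sq Finset.univ e (A.mulVec v)
    calc (∑ jj, e jj * A.mulVec v jj) ^ 2
        ≤ (∑ jj, e jj ^ 2) * ∑ jj, A.mulVec v jj ^ 2 := h1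
      _ = (ε * w) ^ 2 := by rw [mul_pow, hε2, hw2, hga]
  -- |cr| * σ * tn ≤ δ4 * normA * ga
  have hhb : cr * (σ * tn) ≤ δ4 * (normA * ga) := by
    apply le_of_sq_le' _ (mul_nonneg hδ4nn (mul_nonneg hnormAnn hgann))
    have e1 : (cr * (σ * tn)) ^ 2 = cr ^ 2 * ((1 - δ4 ^ 2) * B) := by
      rw [show (cr * (σ * tn)) ^ 2 = cr ^ 2 * (σ ^ 2 * tn ^ 2) by ring, hσ2, ht2]
    have e2 : (δ4 * (normA * ga)) ^ 2 = δ4 ^ 2 * A0 * ga ^ 2 := by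
      rw [show (δ4 * (normA * ga)) ^ 2 = δ4 ^ 2 * normA ^ 2 * ga ^ 2 by ring, hA0eq]
    rw [e1, e2]; exact hss
  -- the main bound:  tn * σ * ρ ≤ δ4 * normA * ρ + ε * σ
  have hMain : tn * (σ * ρ) ≤ δ4 * normA * ρ + ε * σ := by
    rcases eq_or_lt_of_le htnn with h0 | htpos
    · rw [← h0]
      have : (0:ℝ) ≤ δ4 * normA * ρ + ε * σ :=
        add_nonneg (mul_nonneg (mul_nonneg hδ4nn hnormAnn) (le_of_lt hρpos))
          (mul_nonneg hεnn (le_of_lt hσpos))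
      linarith only [this]
    · by_cases hcase : σ * tn ≤ δ4 * normA
      · have h1 := mul_le_mul_of_nonneg_right hcase (le_of_lt hρpos)
        have h2 : 0 ≤ ε * σ := mul_nonneg hεnn (le_of_lt hσpos)
        nlinarith only [h1, h2]
      · push_neg at hcase
        have hwpos : 0 < w := by
          rcases eq_or_lt_of_le hwnn with h0 | h
          · exfalso
            have hga0 : ga = 0 := by rw [← hw2, ← h0]; ring
            have hB0 : (1 - δ4) * B ≤ 0 := by linarith only [hZ1, hga0]
            have hBpos : 0 < B := by rw [← ht2]; positivity
            nlinarith only [hB0, hBpos, hδ4lt]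
          · exact h
        have hσtnn : 0 ≤ σ * tn := mul_nonneg (le_of_lt hσpos) htnn
        have hdotb := mul_le_mul_of_nonneg_right hcs hσtnn
        have heq : ga * (σ * tn)
            = cr * (σ * tn) + (∑ jj, e jj * A.mulVec v jj) * (σ * tn) := by
          rw [horth]; ring
        have hk1 : ga * (σ * tn) ≤ δ4 * (normA * ga) + ε * w * (σ * tn) := by
          rw [heq]; linarith only [hhb, hdotb]
        rw [← hw2] at hk1
        have hk2 : w * (w * (σ * tn) - δ4 * normA * w - ε * (σ * tn)) ≤ 0 := by
          nlinarith only [hk1]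
        have hk3 : w * (σ * tn) - δ4 * normA * w - ε * (σ * tn) ≤ 0 :=
          nonpos_of_mul_nonpos' (by nlinarith only [hk2] :
            (w * (σ * tn) - δ4 * normA * w - ε * (σ * tn)) * w ≤ 0) hwpos
        have hwρ : ρ * tn ≤ w := by
          apply le_of_sq_le' _ hwnn
          rw [show (ρ * tn) ^ 2 = ρ ^ 2 * tn ^ 2 by ring, hρ2, ht2, hw2]
          linarith only [hZ1]
        have hpos2 : 0 < σ * tn - δ4 * normA := by linarith only [hcase]
        have hk4 : (ρ * tn) * (σ * tn - δ4 * normA) ≤ ε * (σ * tn) := by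
          calc (ρ * tn) * (σ * tn - δ4 * normA)
              ≤ w * (σ * tn - δ4 * normA) :=
                mul_le_mul_of_nonneg_right hwρ (le_of_lt hpos2)
            _ ≤ ε * (σ * tn) := by linarith only [hk3]
        have hk5 : (tn * (σ * ρ) - (δ4 * normA * ρ + ε * σ)) * tn ≤ 0 := by
          linarith only [hk4]
        have := nonpos_of_mul_nonpos' hk5 htpos
        linarith only [this]
  -- comparison of error coefficients
  have hρle1 : ρ ≤ 1 := by nlinarith only [hρ2, hρpos, hδ4pos]
  have hsqrt3 : 1 ≤ Real.sqrt (1 + δ3) := by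
    nlinarith only [Real.sq_sqrt (show (0:ℝ) ≤ 1 + δ3 by linarith only [hδ3pos]),
      Real.sqrt_nonneg (1 + δ3), hδ3pos]
  have h1τ : 1 ≤ τ * ρ := by
    rw [hτdef, div_mul_eq_mul_div, le_div_iff₀ (by linarith only [hδ4lt] : (0:ℝ) < 1 - δ4)]
    nlinarith only [hρ2, hρle1, hsqrt3, hρpos]
  -- tn ≤ D
  have hD : tn ≤ δ4 / σ * normA + τ * ε := by
    rw [← mul_le_mul_iff_left₀ (mul_pos hσpos hρpos)]
    have hexp : (δ4 / σ * normA + τ * ε) * (σ * ρ)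
        = δ4 * normA * ρ + ε * σ * (τ * ρ) := by
      field_simp
    rw [hexp]
    have h2 : ε * σ ≤ ε * σ * (τ * ρ) :=
      le_mul_of_one_le_right (mul_nonneg hεnn (le_of_lt hσpos)) h1τ
    linarith only [hMain, h2]
  have hDnn : 0 ≤ δ4 / σ * normA + τ * ε := le_trans htnn hD
  -- gap inequality in terms of D
  have hgapD : Real.sqrt 2 * (δ4 / σ * normA + τ * ε) < |xS (π (p + q - 1))| := by
    calc Real.sqrt 2 * (δ4 / σ * normA + τ * ε)
        = Real.sqrt 2 * δ4 / σ * normA + Real.sqrt 2 * τ * ε := by ring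
      _ < |xS (π (p + q - 1))| := hgap
  -- final coordinatewise argument
  intro j hj i hi
  have hpq1 : p + q - 1 < K := by omega
  have hsort := hπsort j (p + q - 1) (by omega) hpq1
  have hxstar_nn : 0 ≤ Real.sqrt 2 * (δ4 / σ * normA + τ * ε) :=
    mul_nonneg (Real.sqrt_nonneg 2) hDnn
  have hxstar_pos : 0 < |xS (π (p + q - 1))| := lt_of_le_of_lt hxstar_nn hgapD
  obtain ⟨hiU, hiS⟩ := Finset.mem_sdiff.mp hi
  have hxSi : xS i = 0 := by
    by_contra h0; exact hiS (by simp [supp, h0])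
  have hvi : v i = u i := by
    simp [hv, hxU, _root_.restrict, hiU, hxSi]
  have hπjU : π j ∈ U := hUπ j hj
  have hvπ : v (π j) = u (π j) - xS (π j) := by
    simp [hv, hxU, _root_.restrict, hπjU]
  have hxπj_pos : 0 < |xS (π j)| := lt_of_lt_of_le hxstar_pos hsort
  have hπjS : π j ∈ supp xS := by
    simp only [supp, Finset.mem_filter, Finset.mem_univ, true_and]
    intro h0; rw [h0] at hxπj_pos; simp at hxπj_pos
  have hne : i ≠ π j := fun hEq => hiS (hEq ▸ hπjS)
  have hpair : v i ^ 2 + v (π j) ^ 2 ≤ B := by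
    have hsub : ({i, π j} : Finset (Fin d)) ⊆ Finset.univ := Finset.subset_univ _
    have h1 := Finset.sum_le_sum_of_subset_of_nonneg hsub
      (fun k _ _ => sq_nonneg (v k))
    rwa [Finset.sum_pair hne] at h1
  have hBD : B ≤ (δ4 / σ * normA + τ * ε) ^ 2 := by
    rw [← ht2]; exact pow_le_pow_left₀ htnn hD 2
  by_contra hcon
  push_neg at hcon
  have habs : |xS (π j)| ≤ |v i| + |v (π j)| := by
    have hx : xS (π j) = u (π j) - v (π j) := by rw [hvπ]; ring
    calc |xS (π j)| = |u (π j) - v (π j)| := by rw [← hx]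
      _ ≤ |u (π j)| + |v (π j)| := abs_sub _ _
      _ ≤ |u i| + |v (π j)| := by linarith only [hcon]
      _ = |v i| + |v (π j)| := by rw [hvi]
  have hfin : |xS (π (p + q - 1))| ≤ |v i| + |v (π j)| := le_trans hsort habs
  have hsqM : (|v i| + |v (π j)|) ^ 2 ≤ 2 * (δ4 / σ * normA + τ * ε) ^ 2 := by
    nlinarith only [sq_nonneg (|v i| - |v (π j)|), sq_abs (v i), sq_abs (v (π j)),
      hpair, hBD]
  have hs2 : Real.sqrt 2 ^ 2 = 2 := Real.sq_sqrt (by norm_num)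
  have hlt : 2 * (δ4 / σ * normA + τ * ε) ^ 2 < |xS (π (p + q - 1))| ^ 2 := by
    have := pow_lt_pow_left₀ hgapD hxstar_nn (n := 2) (by norm_num)
    calc 2 * (δ4 / σ * normA + τ * ε) ^ 2
        = (Real.sqrt 2 * (δ4 / σ * normA + τ * ε)) ^ 2 := by rw [mul_pow, hs2]
      _ < |xS (π (p + q - 1))| ^ 2 := this
  have hle : |xS (π (p + q - 1))| ^ 2 ≤ (|v i| + |v (π j)|) ^ 2 :=
    pow_le_pow_left₀ (abs_nonneg _) hfin 2
  linarith only [hlt, hle, hsqM]
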